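/- For every λ = (λ1,λ2) ∈ ℕ₀², one can write P_λ(s,t) = Σ_{j=0}^{n} (s·t)^j·(A_j(s) + B_j(t)) for some n ∈ ℕ₀ and polynomials A_j(s) ∈ ℤ[s] with deg A_j ≤ ⌊λ2/2⌋ and B_j(t) ∈ ℤ[t] with deg B_j ≤ ⌊λ1/2⌋. Moreover: (i) if λ2 is even, one may additionally arrange that deg A_j ≤ ⌊λ2/2⌋ − 1 for all j > 0 and that B_j(0) = 0 for all j; (ii) if λ1 is even, one may instead arrange that deg B_j ≤ ⌊λ1/2⌋ − 1 for all j > 0 and that A_j(0) = 0 for all j. -/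

import Mathlib

open MvPolynomial

set_option maxHeartbeats 1000000
set_option synthInstance.maxHeartbeats 400000

noncomputable section

abbrev Rxy : Type := MvPolynomial (Fin 2) ℤ

/-- The fraction field of ℤ[x,y]. -/
abbrev Kxy : Type := FractionRing Rxy

/-- The image of `x` in the fraction field. -/
noncomputable def xx : Kxy := algebraMap Rxy Kxy (X 0)

/-- The image of `y` in the fraction field. -/
noncomputable def yy : Kxy := algebraMap Rxy Kxy (X 1)

/-- `s = x / y²`. -/
noncomputable def sv : Kxy := xx / yy ^ 2

/-- `t = y / x²`. -/
noncomputable def tv : Kxy := yy / xx ^ 2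

/-- Evaluation of a two-variable integer polynomial at `(s, t)` in the fraction field. -/
noncomputable def evST (p : Rxy) : Kxy := aeval ![sv, tv] p

/-- Defining properties of the SU(3) character polynomials `Q a b`
(with the convention `Q a b = 0` whenever `(a, b) ∉ ℕ₀²`). -/
def IsQSU3 (Q : ℤ → ℤ → Rxy) : Prop :=
  (∀ a b : ℤ, (a < 0 ∨ b < 0) → Q a b = 0) ∧
  Q 0 0 = 1 ∧
  Q 1 0 = X 0 ∧
  (∀ a b : ℤ, 0 ≤ a → 0 ≤ b →
    X 0 * Q a b = Q (a + 1) b + Q a (b - 1) + Q (a - 1) (b + 1)) ∧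
  (∀ a b : ℤ, rename (Equiv.swap (0 : Fin 2) 1) (Q a b) = Q b a)

/-- Defining property of the polynomials `P a b` (in the variables `s, t`), namely
`P_λ(x/y², y/x²) = x^{-λ₁} y^{-λ₂} Q_λ(x,y)` in the fraction field of ℤ[x,y]
(with the convention `P a b = 0` whenever `(a, b) ∉ ℕ₀²`). -/
def IsPSU3 (Q P : ℤ → ℤ → Rxy) : Prop :=
  (∀ a b : ℤ, (a < 0 ∨ b < 0) → P a b = 0) ∧
  (∀ a b : ℤ, 0 ≤ a → 0 ≤ b →
    evST (P a b) = algebraMap Rxy Kxy (Q a b) / (xx ^ a * yy ^ b))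

namespace SU3

/-- The basic shape sum. -/
noncomputable def shapeSum (n : ℕ) (A B : ℕ → Polynomial ℤ) : Rxy :=
  ∑ j ∈ Finset.range (n + 1),
    (X 0 * X 1) ^ j *
      (Polynomial.aeval (X 0 : Rxy) (A j) + Polynomial.aeval (X 1 : Rxy) (B j))

def Plain (a b : ℕ) (p : Rxy) : Prop :=
  ∃ (n : ℕ) (A B : ℕ → Polynomial ℤ), p = shapeSum n A B ∧
    (∀ j, (A j).degree ≤ ((b / 2 : ℕ) : WithBot ℕ)) ∧
    (∀ j, (B j).degree ≤ ((a / 2 : ℕ) : WithBot ℕ))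

def EvB (a b : ℕ) (p : Rxy) : Prop :=
  ∃ (n : ℕ) (A B : ℕ → Polynomial ℤ), p = shapeSum n A B ∧
    (∀ j, (A j).degree ≤ ((b / 2 : ℕ) : WithBot ℕ)) ∧
    (∀ j, (B j).degree ≤ ((a / 2 : ℕ) : WithBot ℕ)) ∧
    (∀ j, 0 < j → (A j).degree < ((b / 2 : ℕ) : WithBot ℕ)) ∧
    (∀ j, (B j).coeff 0 = 0)

def EvA (a b : ℕ) (p : Rxy) : Prop :=
  ∃ (n : ℕ) (A B : ℕ → Polynomial ℤ), p = shapeSum n A B ∧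
    (∀ j, (A j).degree ≤ ((b / 2 : ℕ) : WithBot ℕ)) ∧
    (∀ j, (B j).degree ≤ ((a / 2 : ℕ) : WithBot ℕ)) ∧
    (∀ j, 0 < j → (B j).degree < ((a / 2 : ℕ) : WithBot ℕ)) ∧
    (∀ j, (A j).coeff 0 = 0)

def Shape (a b : ℕ) (p : Rxy) : Prop :=
  Plain a b p ∧ (Even b → EvB a b p) ∧ (Even a → EvA a b p)

/-! ### generic helpers -/

lemma natCast_le_natCast {m n : ℕ} (h : m ≤ n) : (m : WithBot ℕ) ≤ (n : WithBot ℕ) := by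
  exact_mod_cast h

lemma lt_coe_of_lt {x : WithBot ℕ} {m n : ℕ} (h : x < (m : WithBot ℕ)) (h' : m ≤ n) :
    x < (n : WithBot ℕ) := lt_of_lt_of_le h (natCast_le_natCast h')

lemma deg_C_le (c : ℤ) (k : ℕ) : (Polynomial.C c).degree ≤ (k : WithBot ℕ) :=
  Polynomial.degree_C_le.trans (natCast_le_natCast (Nat.zero_le k))

lemma deg_add_C_le {q : Polynomial ℤ} {k : ℕ} (h : q.degree ≤ (k : WithBot ℕ)) (c : ℤ) :
    (q + Polynomial.C c).degree ≤ (k : WithBot ℕ) :=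
  (Polynomial.degree_add_le _ _).trans (max_le h (deg_C_le c k))

lemma deg_add_C_lt {q : Polynomial ℤ} {k : ℕ} (h : q.degree < (k : WithBot ℕ)) (hk : 1 ≤ k)
    (c : ℤ) : (q + Polynomial.C c).degree < (k : WithBot ℕ) :=
  (Polynomial.degree_add_le _ _).trans_lt
    (max_lt h (Polynomial.degree_C_le.trans_lt (by exact_mod_cast hk)))

lemma deg_sub_C_le {q : Polynomial ℤ} {k : ℕ} (h : q.degree ≤ (k : WithBot ℕ)) (c : ℤ) :
    (q - Polynomial.C c).degree ≤ (k : WithBot ℕ) :=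
  (Polynomial.degree_sub_le _ _).trans (max_le h (deg_C_le c k))

lemma bot_lt_natCast (k : ℕ) : (⊥ : WithBot ℕ) < (k : WithBot ℕ) := by
  rw [Nat.cast_withBot]; exact WithBot.bot_lt_coe _

lemma deg_mulX_le {q : Polynomial ℤ} {k : ℕ} (h : q.degree ≤ (k : WithBot ℕ)) :
    (q * Polynomial.X).degree ≤ ((k + 1 : ℕ) : WithBot ℕ) := by
  rcases eq_or_ne q 0 with rfl | hq
  · rw [zero_mul, Polynomial.degree_zero]; exact bot_le
  · rw [Polynomial.degree_mul, Polynomial.degree_X, Polynomial.degree_eq_natDegree hq] at *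
    have h' : q.natDegree ≤ k := by exact_mod_cast h
    exact_mod_cast Nat.add_le_add_right h' 1

lemma deg_mulX_lt {q : Polynomial ℤ} {k : ℕ} (h : q.degree < (k : WithBot ℕ)) :
    (q * Polynomial.X).degree < ((k + 1 : ℕ) : WithBot ℕ) := by
  rcases eq_or_ne q 0 with rfl | hq
  · rw [zero_mul, Polynomial.degree_zero]; exact bot_lt_natCast _
  · rw [Polynomial.degree_mul, Polynomial.degree_X, Polynomial.degree_eq_natDegree hq] at *
    have h' : q.natDegree < k := by exact_mod_cast h
    exact_mod_cast Nat.add_lt_add_right h' 1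

lemma lt_coe_imp_le_pred {x : WithBot ℕ} {k : ℕ} (h : x < (k : WithBot ℕ)) :
    x ≤ ((k - 1 : ℕ) : WithBot ℕ) := by
  induction x using WithBot.recBotCoe with
  | bot => exact bot_le
  | coe m =>
    simp only [Nat.cast_withBot] at h ⊢
    exact WithBot.coe_le_coe.mpr (Nat.le_sub_one_of_lt (WithBot.coe_lt_coe.mp h))

lemma deg_divX_lt {p : Polynomial ℤ} {k : ℕ} (h : p.degree ≤ (k : WithBot ℕ)) :
    p.divX.degree < (k : WithBot ℕ) := by
  rcases eq_or_ne p 0 with rfl | hp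
  · rw [Polynomial.divX_zero, Polynomial.degree_zero]; exact bot_lt_natCast _
  · exact (Polynomial.degree_divX_lt hp).trans_le h

lemma deg_divX_le {p : Polynomial ℤ} {k : ℕ} (h : p.degree ≤ (k : WithBot ℕ)) :
    p.divX.degree ≤ ((k - 1 : ℕ) : WithBot ℕ) :=
  lt_coe_imp_le_pred (deg_divX_lt h)

/-! ### shapeSum manipulation -/

def padF (n : ℕ) (A : ℕ → Polynomial ℤ) : ℕ → Polynomial ℤ := fun j => if j ≤ n then A j else 0

def shA (A : ℕ → Polynomial ℤ) : ℕ → Polynomial ℤ := fun j => Nat.rec 0 (fun j _ => A j) j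

@[simp] lemma shA_zero (A : ℕ → Polynomial ℤ) : shA A 0 = 0 := rfl
@[simp] lemma shA_succ (A : ℕ → Polynomial ℤ) (j : ℕ) : shA A (j + 1) = A j := rfl

lemma padF_cases (n : ℕ) (A : ℕ → Polynomial ℤ) (j : ℕ) :
    padF n A j = A j ∨ padF n A j = 0 := by
  unfold padF; split <;> simp

lemma shapeSum_zero (n : ℕ) : shapeSum n (fun _ => 0) (fun _ => 0) = 0 := by
  simp [shapeSum]

lemma shapeSum_pad (n : ℕ) (A B : ℕ → Polynomial ℤ) :
    shapeSum n (padF n A) (padF n B) = shapeSum n A B := by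
  unfold shapeSum
  refine Finset.sum_congr rfl fun j hj => ?_
  have hj' : j ≤ n := Nat.lt_succ_iff.mp (Finset.mem_range.mp hj)
  simp [padF, hj']

lemma shapeSum_ext {n m : ℕ} (h : n ≤ m) (A B : ℕ → Polynomial ℤ) :
    shapeSum m (padF n A) (padF n B) = shapeSum n A B := by
  rw [← shapeSum_pad n A B]
  unfold shapeSum
  refine (Finset.sum_subset (Finset.range_subset_range.mpr (by omega)) fun j _ hj => ?_).symm
  have hj' : ¬ j ≤ n := fun hle => hj (Finset.mem_range.mpr (by omega))
  simp [padF, hj']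

lemma shapeSum_sub (n₁ n₂ : ℕ) (A₁ B₁ A₂ B₂ : ℕ → Polynomial ℤ) :
    shapeSum n₁ A₁ B₁ - shapeSum n₂ A₂ B₂ =
      shapeSum (max n₁ n₂) (fun j => padF n₁ A₁ j - padF n₂ A₂ j)
        (fun j => padF n₁ B₁ j - padF n₂ B₂ j) := by
  rw [← shapeSum_ext (le_max_left n₁ n₂) A₁ B₁, ← shapeSum_ext (le_max_right n₁ n₂) A₂ B₂]
  unfold shapeSum
  rw [← Finset.sum_sub_distrib]
  refine Finset.sum_congr rfl fun j _ => ?_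
  simp only [map_sub]
  ring

lemma shapeSum_absorbA (n : ℕ) (A B : ℕ → Polynomial ℤ) :
    shapeSum n A B = shapeSum n (fun j => A j - Polynomial.C ((A j).coeff 0))
      (fun j => B j + Polynomial.C ((A j).coeff 0)) := by
  unfold shapeSum
  refine Finset.sum_congr rfl fun j _ => ?_
  simp only [map_sub, map_add, Polynomial.aeval_C]
  ring

lemma shapeSum_absorbB (n : ℕ) (A B : ℕ → Polynomial ℤ) :
    shapeSum n A B = shapeSum n (fun j => A j + Polynomial.C ((B j).coeff 0))
      (fun j => B j - Polynomial.C ((B j).coeff 0)) := by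
  unfold shapeSum
  refine Finset.sum_congr rfl fun j _ => ?_
  simp only [map_sub, map_add, Polynomial.aeval_C]
  ring

lemma shapeSum_shift (n : ℕ) (A B : ℕ → Polynomial ℤ) :
    (X 0 * X 1 : Rxy) * shapeSum n A B = shapeSum (n + 1) (shA A) (shA B) := by
  unfold shapeSum
  rw [Finset.mul_sum,
    Finset.sum_range_succ' (fun j => (X 0 * X 1 : Rxy) ^ j *
      (Polynomial.aeval (X 0 : Rxy) (shA A j) + Polynomial.aeval (X 1 : Rxy) (shA B j))) (n + 1)]
  simp only [shA_succ, shA_zero, map_zero, add_zero, pow_zero, one_mul, mul_zero]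
  refine Finset.sum_congr rfl fun j _ => ?_
  ring

lemma shapeSum_mulX1 (n : ℕ) (A B : ℕ → Polynomial ℤ) :
    (X 1 : Rxy) * shapeSum n A B =
      shapeSum (n + 1) (shA fun j => (A j).divX)
        (padF n fun j => (B j + Polynomial.C ((A j).coeff 0)) * Polynomial.X) := by
  have key : ∀ j, (X 1 : Rxy) * (Polynomial.aeval (X 0 : Rxy) (A j)
      + Polynomial.aeval (X 1 : Rxy) (B j)) =
      (X 0 * X 1) * Polynomial.aeval (X 0 : Rxy) ((A j).divX)
        + Polynomial.aeval (X 1 : Rxy) ((B j + Polynomial.C ((A j).coeff 0)) * Polynomial.X) := by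
    intro j
    have hA : Polynomial.aeval (X 0 : Rxy) (A j) =
        Polynomial.aeval (X 0 : Rxy) ((A j).divX) * X 0 + algebraMap ℤ Rxy ((A j).coeff 0) := by
      conv_lhs => rw [← Polynomial.divX_mul_X_add (A j)]
      simp [map_add, map_mul, Polynomial.aeval_C]
    rw [hA]
    simp only [map_mul, map_add, Polynomial.aeval_C, Polynomial.aeval_X]
    ring
  set A' := shA fun j => (A j).divX with hA'
  set B' := padF n fun j => (B j + Polynomial.C ((A j).coeff 0)) * Polynomial.X with hB'
  set g := fun j => (X 0 * X 1 : Rxy) ^ j * Polynomial.aeval (X 0 : Rxy) (A' j) with hg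
  set h := fun j => (X 0 * X 1 : Rxy) ^ j * Polynomial.aeval (X 1 : Rxy) (B' j) with hh
  have hR : shapeSum (n + 1) A' B' =
      ∑ j ∈ Finset.range (n + 1), (g (j + 1) + h j) := by
    have hsplit : shapeSum (n + 1) A' B' =
        (∑ j ∈ Finset.range (n + 2), g j) + ∑ j ∈ Finset.range (n + 2), h j := by
      rw [← Finset.sum_add_distrib]
      unfold shapeSum
      exact Finset.sum_congr rfl fun j _ => by rw [hg, hh]; ring
    rw [hsplit, Finset.sum_range_succ' g (n + 1), Finset.sum_range_succ h (n + 1)]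
    have hg0 : g 0 = 0 := by simp [hg, hA']
    have hh1 : h (n + 1) = 0 := by
      have hn : ¬ (n + 1 ≤ n) := by omega
      simp [hh, hB', padF, hn]
    rw [hg0, hh1, add_zero, add_zero, ← Finset.sum_add_distrib]
  rw [hR]
  unfold shapeSum
  rw [Finset.mul_sum]
  refine Finset.sum_congr rfl fun j hj => ?_
  have hj' : j ≤ n := Nat.lt_succ_iff.mp (Finset.mem_range.mp hj)
  have hcomm : (X 1 : Rxy) * ((X 0 * X 1) ^ j *
      (Polynomial.aeval (X 0 : Rxy) (A j) + Polynomial.aeval (X 1 : Rxy) (B j))) =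
      (X 0 * X 1) ^ j * (X 1 *
      (Polynomial.aeval (X 0 : Rxy) (A j) + Polynomial.aeval (X 1 : Rxy) (B j))) := by ring
  rw [hcomm, key j, hg, hh]
  simp only [hA', hB', shA_succ, padF, if_pos hj']
  ring

/-! ### predicate-level lemmas -/

lemma deg_zero_le {D : WithBot ℕ} : (0 : Polynomial ℤ).degree ≤ D := by
  rw [Polynomial.degree_zero]; exact bot_le

lemma deg_zero_lt (k : ℕ) : (0 : Polynomial ℤ).degree < (k : WithBot ℕ) := by
  rw [Polynomial.degree_zero]; exact bot_lt_natCast k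

lemma padF_deg_le {n : ℕ} {A : ℕ → Polynomial ℤ} {D : WithBot ℕ}
    (h : ∀ j, (A j).degree ≤ D) (j : ℕ) : (padF n A j).degree ≤ D := by
  rcases padF_cases n A j with h' | h' <;> rw [h']
  · exact h j
  · exact deg_zero_le

lemma padF_deg_lt {n : ℕ} {A : ℕ → Polynomial ℤ} {k : ℕ}
    (h : ∀ j, 0 < j → (A j).degree < (k : WithBot ℕ)) (j : ℕ) (hj : 0 < j) :
    (padF n A j).degree < (k : WithBot ℕ) := by
  rcases padF_cases n A j with h' | h' <;> rw [h']
  · exact h j hj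
  · exact deg_zero_lt k

lemma padF_coeff0 {n : ℕ} {A : ℕ → Polynomial ℤ}
    (h : ∀ j, (A j).coeff 0 = 0) (j : ℕ) : (padF n A j).coeff 0 = 0 := by
  rcases padF_cases n A j with h' | h' <;> rw [h']
  · exact h j
  · simp

lemma Plain_zero (a b : ℕ) : Plain a b 0 :=
  ⟨0, fun _ => 0, fun _ => 0, (shapeSum_zero 0).symm, fun _ => deg_zero_le, fun _ => deg_zero_le⟩

lemma EvB_zero (a b : ℕ) : EvB a b 0 :=
  ⟨0, fun _ => 0, fun _ => 0, (shapeSum_zero 0).symm, fun _ => deg_zero_le, fun _ => deg_zero_le,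
    fun _ _ => deg_zero_lt _, fun _ => rfl⟩

lemma EvA_zero (a b : ℕ) : EvA a b 0 :=
  ⟨0, fun _ => 0, fun _ => 0, (shapeSum_zero 0).symm, fun _ => deg_zero_le, fun _ => deg_zero_le,
    fun _ _ => deg_zero_lt _, fun _ => rfl⟩

lemma Shape_zero (a b : ℕ) : Shape a b 0 :=
  ⟨Plain_zero a b, fun _ => EvB_zero a b, fun _ => EvA_zero a b⟩

lemma Plain_sub {a b : ℕ} {p q : Rxy} (h1 : Plain a b p) (h2 : Plain a b q) :
    Plain a b (p - q) := by
  obtain ⟨n1, A1, B1, rfl, hA1, hB1⟩ := h1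
  obtain ⟨n2, A2, B2, rfl, hA2, hB2⟩ := h2
  refine ⟨max n1 n2, _, _, shapeSum_sub n1 n2 A1 B1 A2 B2, fun j => ?_, fun j => ?_⟩
  · exact (Polynomial.degree_sub_le _ _).trans
      (max_le (padF_deg_le hA1 j) (padF_deg_le hA2 j))
  · exact (Polynomial.degree_sub_le _ _).trans
      (max_le (padF_deg_le hB1 j) (padF_deg_le hB2 j))

lemma EvB_sub {a b : ℕ} {p q : Rxy} (h1 : EvB a b p) (h2 : EvB a b q) :
    EvB a b (p - q) := by
  obtain ⟨n1, A1, B1, rfl, hA1, hB1, hAlt1, hB01⟩ := h1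
  obtain ⟨n2, A2, B2, rfl, hA2, hB2, hAlt2, hB02⟩ := h2
  refine ⟨max n1 n2, _, _, shapeSum_sub n1 n2 A1 B1 A2 B2, fun j => ?_, fun j => ?_,
    fun j hj => ?_, fun j => ?_⟩
  · exact (Polynomial.degree_sub_le _ _).trans
      (max_le (padF_deg_le hA1 j) (padF_deg_le hA2 j))
  · exact (Polynomial.degree_sub_le _ _).trans
      (max_le (padF_deg_le hB1 j) (padF_deg_le hB2 j))
  · exact (Polynomial.degree_sub_le _ _).trans_lt
      (max_lt (padF_deg_lt hAlt1 j hj) (padF_deg_lt hAlt2 j hj))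
  · rw [Polynomial.coeff_sub, padF_coeff0 hB01 j, padF_coeff0 hB02 j, sub_zero]

lemma EvA_sub {a b : ℕ} {p q : Rxy} (h1 : EvA a b p) (h2 : EvA a b q) :
    EvA a b (p - q) := by
  obtain ⟨n1, A1, B1, rfl, hA1, hB1, hBlt1, hA01⟩ := h1
  obtain ⟨n2, A2, B2, rfl, hA2, hB2, hBlt2, hA02⟩ := h2
  refine ⟨max n1 n2, _, _, shapeSum_sub n1 n2 A1 B1 A2 B2, fun j => ?_, fun j => ?_,
    fun j hj => ?_, fun j => ?_⟩
  · exact (Polynomial.degree_sub_le _ _).trans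
      (max_le (padF_deg_le hA1 j) (padF_deg_le hA2 j))
  · exact (Polynomial.degree_sub_le _ _).trans
      (max_le (padF_deg_le hB1 j) (padF_deg_le hB2 j))
  · exact (Polynomial.degree_sub_le _ _).trans_lt
      (max_lt (padF_deg_lt hBlt1 j hj) (padF_deg_lt hBlt2 j hj))
  · rw [Polynomial.coeff_sub, padF_coeff0 hA01 j, padF_coeff0 hA02 j, sub_zero]

lemma Plain_mono {a b a' b' : ℕ} (ha : a ≤ a') (hb : b ≤ b') {p : Rxy}
    (h : Plain a b p) : Plain a' b' p := by
  obtain ⟨n, A, B, rfl, hA, hB⟩ := h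
  exact ⟨n, A, B, rfl,
    fun j => (hA j).trans (natCast_le_natCast (Nat.div_le_div_right hb)),
    fun j => (hB j).trans (natCast_le_natCast (Nat.div_le_div_right ha))⟩

lemma EvB_monoA {a b a' : ℕ} (ha : a ≤ a') {p : Rxy} (h : EvB a b p) : EvB a' b p := by
  obtain ⟨n, A, B, rfl, hA, hB, hAlt, hB0⟩ := h
  exact ⟨n, A, B, rfl, hA,
    fun j => (hB j).trans (natCast_le_natCast (Nat.div_le_div_right ha)), hAlt, hB0⟩

/-! ### transformations -/

lemma Plain_shift {a b : ℕ} {q : Rxy} (h : Plain a b q) :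
    Plain a b ((X 0 * X 1 : Rxy) * q) := by
  obtain ⟨n, A, B, rfl, hA, hB⟩ := h
  refine ⟨n + 1, _, _, shapeSum_shift n A B, fun j => ?_, fun j => ?_⟩ <;>
    cases j with
    | zero => exact deg_zero_le
    | succ j => first
      | exact hA j
      | exact hB j

lemma Plain_mulX1 {a b : ℕ} {r : Rxy} (h : Plain a (b + 1) r) :
    Plain (a + 2) b ((X 1 : Rxy) * r) := by
  obtain ⟨n, A, B, rfl, hA, hB⟩ := h
  refine ⟨n + 1, _, _, shapeSum_mulX1 n A B, fun j => ?_, fun j => ?_⟩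
  · cases j with
    | zero => exact deg_zero_le
    | succ j =>
      rw [shA_succ]
      exact (deg_divX_le (hA j)).trans (natCast_le_natCast (by omega))
  · refine padF_deg_le (fun j => ?_) j
    have : ((B j + Polynomial.C ((A j).coeff 0)) * Polynomial.X).degree ≤
        ((a / 2 + 1 : ℕ) : WithBot ℕ) := deg_mulX_le (deg_add_C_le (hB j) _)
    exact this.trans (natCast_le_natCast (by omega))

lemma EvB_shift_q {a b : ℕ} {q : Rxy} (hb : Even b) (hb2 : 2 ≤ b)
    (h : Plain a (b - 1) q) : EvB a b ((X 0 * X 1 : Rxy) * q) := by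
  obtain ⟨n, A, B, rfl, hA, hB⟩ := h
  rw [shapeSum_absorbB, shapeSum_shift]
  have hb' : (b - 1) / 2 < b / 2 := by
    obtain ⟨c, rfl⟩ := hb; omega
  refine ⟨n + 1, _, _, rfl, fun j => ?_, fun j => ?_, fun j hj => ?_, fun j => ?_⟩
  · cases j with
    | zero => exact deg_zero_le
    | succ j => exact (deg_add_C_le (hA j) _).trans (natCast_le_natCast (by omega))
  · cases j with
    | zero => exact deg_zero_le
    | succ j => exact deg_sub_C_le (hB j) _
  · cases j with
    | zero => exact absurd hj (by omega)
    | succ j =>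
      rw [shA_succ]
      exact lt_of_le_of_lt (deg_add_C_le (hA j) _) (by exact_mod_cast hb')
  · cases j with
    | zero => rfl
    | succ j =>
      rw [shA_succ, Polynomial.coeff_sub, Polynomial.coeff_C_zero, sub_self]

lemma EvB_mulX1_r {a b : ℕ} {r : Rxy} (hb : Even b) (h : Plain a (b + 1) r) :
    EvB (a + 2) b ((X 1 : Rxy) * r) := by
  obtain ⟨n, A, B, rfl, hA, hB⟩ := h
  have hbb : (b + 1) / 2 = b / 2 := by obtain ⟨c, rfl⟩ := hb; omega
  refine ⟨n + 1, _, _, shapeSum_mulX1 n A B, fun j => ?_, fun j => ?_, fun j hj => ?_, fun j => ?_⟩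
  · cases j with
    | zero => exact deg_zero_le
    | succ j =>
      rw [shA_succ]
      exact le_of_lt (deg_divX_lt ((hA j).trans (natCast_le_natCast (by omega))))
  · refine padF_deg_le (fun j => ?_) j
    have : ((B j + Polynomial.C ((A j).coeff 0)) * Polynomial.X).degree ≤
        ((a / 2 + 1 : ℕ) : WithBot ℕ) := deg_mulX_le (deg_add_C_le (hB j) _)
    exact this.trans (natCast_le_natCast (by omega))
  · cases j with
    | zero => exact absurd hj (by omega)
    | succ j =>
      rw [shA_succ]
      exact deg_divX_lt ((hA j).trans (natCast_le_natCast (by omega)))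
  · exact padF_coeff0 (fun j => Polynomial.coeff_mul_X_zero _) j

lemma EvA_absorb_p {a b : ℕ} {p : Rxy} (ha : Odd a) (h : Plain a b p) :
    EvA (a + 1) b p := by
  obtain ⟨n, A, B, rfl, hA, hB⟩ := h
  rw [shapeSum_absorbA]
  have ha' : a / 2 < (a + 1) / 2 := by obtain ⟨c, rfl⟩ := ha; omega
  refine ⟨n, _, _, rfl, fun j => deg_sub_C_le (hA j) _,
    fun j => (deg_add_C_le (hB j) _).trans (natCast_le_natCast (by omega)),
    fun j _ => lt_of_le_of_lt (deg_add_C_le (hB j) _) (by exact_mod_cast ha'),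
    fun j => by rw [Polynomial.coeff_sub, Polynomial.coeff_C_zero, sub_self]⟩

lemma EvA_shift_q {a b : ℕ} {q : Rxy} (ha : Odd a) (h : Plain a b q) :
    EvA (a + 1) b ((X 0 * X 1 : Rxy) * q) := by
  obtain ⟨n, A, B, rfl, hA, hB⟩ := h
  rw [shapeSum_absorbA, shapeSum_shift]
  have ha' : a / 2 < (a + 1) / 2 := by obtain ⟨c, rfl⟩ := ha; omega
  refine ⟨n + 1, _, _, rfl, fun j => ?_, fun j => ?_, fun j hj => ?_, fun j => ?_⟩
  · cases j with
    | zero => exact deg_zero_le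
    | succ j => exact deg_sub_C_le (hA j) _
  · cases j with
    | zero => exact deg_zero_le
    | succ j => exact (deg_add_C_le (hB j) _).trans (natCast_le_natCast (by omega))
  · cases j with
    | zero => exact absurd hj (by omega)
    | succ j =>
      rw [shA_succ]
      exact lt_of_le_of_lt (deg_add_C_le (hB j) _) (by exact_mod_cast ha')
  · cases j with
    | zero => rfl
    | succ j =>
      rw [shA_succ, Polynomial.coeff_sub, Polynomial.coeff_C_zero, sub_self]

lemma EvA_mulX1_r {c b : ℕ} {r : Rxy} (h : EvA c (b + 1) r) :
    EvA (c + 2) b ((X 1 : Rxy) * r) := by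
  obtain ⟨n, A, B, rfl, hA, hB, hBlt, hA0⟩ := h
  rw [shapeSum_mulX1, shapeSum_absorbA]
  have hc2 : 1 ≤ (c + 2) / 2 := by omega
  refine ⟨n + 1, _, _, rfl, fun j => ?_, fun j => ?_, fun j hj => ?_, fun j => ?_⟩
  · -- degree of A₂ j = shA (divX∘A) j - C (coeff 0)
    refine deg_sub_C_le ?_ _
    cases j with
    | zero => exact deg_zero_le
    | succ j =>
      rw [shA_succ]
      exact (deg_divX_le (hA j)).trans (natCast_le_natCast (by omega))
  · -- degree of B₂ j ≤ (c+2)/2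
    refine deg_add_C_le ?_ _
    refine padF_deg_le (fun j => ?_) j
    have : ((B j + Polynomial.C ((A j).coeff 0)) * Polynomial.X).degree ≤
        ((c / 2 + 1 : ℕ) : WithBot ℕ) := deg_mulX_le (deg_add_C_le (hB j) _)
    exact this.trans (natCast_le_natCast (by omega))
  · -- strict degree of B₂ j for 0 < j
    refine deg_add_C_lt ?_ hc2 _
    rcases padF_cases n (fun j => (B j + Polynomial.C ((A j).coeff 0)) * Polynomial.X) j
      with h' | h' <;> rw [h']
    · rw [hA0 j, map_zero, add_zero]
      have : ((B j) * Polynomial.X).degree < ((c / 2 + 1 : ℕ) : WithBot ℕ) :=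
        deg_mulX_lt (hBlt j hj)
      exact lt_coe_of_lt this (by omega)
    · exact deg_zero_lt _
  · rw [Polynomial.coeff_sub, Polynomial.coeff_C_zero, sub_self]

/-! ### step lemmas -/

lemma Plain_step {a b : ℕ} {p q r : Rxy}
    (hp : Plain a b p)
    (hq : q = 0 ∨ (1 ≤ b ∧ Plain a (b - 1) q))
    (hr : r = 0 ∨ (1 ≤ a ∧ Plain (a - 1) (b + 1) r)) :
    Plain (a + 1) b (p - (X 0 * X 1) * q - X 1 * r) := by
  refine Plain_sub (Plain_sub (Plain_mono (Nat.le_succ a) le_rfl hp) ?_) ?_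
  · rcases hq with rfl | ⟨hb, hq⟩
    · rw [mul_zero]; exact Plain_zero _ _
    · exact Plain_mono (Nat.le_succ a) (by omega) (Plain_shift hq)
  · rcases hr with rfl | ⟨ha, hr⟩
    · rw [mul_zero]; exact Plain_zero _ _
    · have := Plain_mulX1 hr
      rwa [show a - 1 + 2 = a + 1 by omega] at this

lemma EvB_step {a b : ℕ} {p q r : Rxy} (hb : Even b)
    (hp : EvB a b p)
    (hq : q = 0 ∨ (1 ≤ b ∧ Plain a (b - 1) q))
    (hr : r = 0 ∨ (1 ≤ a ∧ Plain (a - 1) (b + 1) r)) :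
    EvB (a + 1) b (p - (X 0 * X 1) * q - X 1 * r) := by
  refine EvB_sub (EvB_sub (EvB_monoA (Nat.le_succ a) hp) ?_) ?_
  · rcases hq with rfl | ⟨hb1, hq⟩
    · rw [mul_zero]; exact EvB_zero _ _
    · have hb2 : 2 ≤ b := by
        rcases hb with ⟨c, rfl⟩; omega
      exact EvB_monoA (Nat.le_succ a) (EvB_shift_q hb hb2 hq)
  · rcases hr with rfl | ⟨ha, hr⟩
    · rw [mul_zero]; exact EvB_zero _ _
    · have := EvB_mulX1_r hb hr
      rwa [show a - 1 + 2 = a + 1 by omega] at this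

lemma EvA_step {a b : ℕ} {p q r : Rxy} (ha : Odd a)
    (hp : Plain a b p)
    (hq : q = 0 ∨ (1 ≤ b ∧ Plain a (b - 1) q))
    (hr : r = 0 ∨ (1 ≤ a ∧ EvA (a - 1) (b + 1) r)) :
    EvA (a + 1) b (p - (X 0 * X 1) * q - X 1 * r) := by
  refine EvA_sub (EvA_sub (EvA_absorb_p ha hp) ?_) ?_
  · rcases hq with rfl | ⟨hb1, hq⟩
    · rw [mul_zero]; exact EvA_zero _ _
    · exact EvA_shift_q ha (Plain_mono le_rfl (by omega) hq)
  · rcases hr with rfl | ⟨ha1, hr⟩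
    · rw [mul_zero]; exact EvA_zero _ _
    · have := EvA_mulX1_r hr
      rwa [show a - 1 + 2 = a + 1 by omega] at this

lemma Shape_step {a b : ℕ} {p q r : Rxy}
    (hp : Shape a b p)
    (hq : q = 0 ∨ (1 ≤ b ∧ Shape a (b - 1) q))
    (hr : r = 0 ∨ (1 ≤ a ∧ Shape (a - 1) (b + 1) r)) :
    Shape (a + 1) b (p - (X 0 * X 1) * q - X 1 * r) := by
  have hqP : q = 0 ∨ (1 ≤ b ∧ Plain a (b - 1) q) :=
    hq.imp id fun ⟨h1, h2⟩ => ⟨h1, h2.1⟩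
  have hrP : r = 0 ∨ (1 ≤ a ∧ Plain (a - 1) (b + 1) r) :=
    hr.imp id fun ⟨h1, h2⟩ => ⟨h1, h2.1⟩
  refine ⟨Plain_step hp.1 hqP hrP, fun hbEven => EvB_step hbEven (hp.2.1 hbEven) hqP hrP,
    fun haEven => ?_⟩
  have haOdd : Odd a := by
    rcases haEven with ⟨c, hc⟩
    exact ⟨c - 1, by omega⟩
  refine EvA_step haOdd hp.1 hqP ?_
  refine hr.imp id fun ⟨h1, h2⟩ => ⟨h1, h2.2.2 ?_⟩
  rcases haOdd with ⟨c, rfl⟩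
  exact ⟨c, by omega⟩

/-! ### swap -/

noncomputable def sw : Rxy →ₐ[ℤ] Rxy := rename (Equiv.swap (0 : Fin 2) 1)

lemma sw_X0 : sw (X 0) = X 1 := by
  rw [sw, rename_X, Equiv.swap_apply_left]

lemma sw_X1 : sw (X 1) = X 0 := by
  rw [sw, rename_X, Equiv.swap_apply_right]

lemma sw_sw (p : Rxy) : sw (sw p) = p := by
  show rename _ (rename _ p) = p
  rw [rename_rename]
  rw [show ((Equiv.swap (0 : Fin 2) 1 : Equiv _ _) : Fin 2 → Fin 2) ∘
      (Equiv.swap (0 : Fin 2) 1) = id from funext fun i => Equiv.swap_apply_self _ _ _]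
  rw [rename_id]; rfl

lemma sw_shapeSum (n : ℕ) (A B : ℕ → Polynomial ℤ) :
    sw (shapeSum n A B) = shapeSum n B A := by
  unfold shapeSum
  rw [map_sum]
  refine Finset.sum_congr rfl fun j _ => ?_
  rw [map_mul, map_pow, map_mul, sw_X0, sw_X1, map_add,
    ← Polynomial.aeval_algHom_apply, ← Polynomial.aeval_algHom_apply, sw_X0, sw_X1]
  ring

lemma Plain_swap {a b : ℕ} {p : Rxy} (h : Plain a b p) : Plain b a (sw p) := by
  obtain ⟨n, A, B, rfl, hA, hB⟩ := h
  exact ⟨n, B, A, (sw_shapeSum n A B), hB, hA⟩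

lemma EvB_swap {a b : ℕ} {p : Rxy} (h : EvB a b p) : EvA b a (sw p) := by
  obtain ⟨n, A, B, rfl, hA, hB, hAlt, hB0⟩ := h
  exact ⟨n, B, A, (sw_shapeSum n A B), hB, hA, hAlt, hB0⟩

lemma EvA_swap {a b : ℕ} {p : Rxy} (h : EvA a b p) : EvB b a (sw p) := by
  obtain ⟨n, A, B, rfl, hA, hB, hBlt, hA0⟩ := h
  exact ⟨n, B, A, (sw_shapeSum n A B), hB, hA, hBlt, hA0⟩

lemma Shape_swap {a b : ℕ} {p : Rxy} (h : Shape a b p) : Shape b a (sw p) :=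
  ⟨Plain_swap h.1, fun ha => EvA_swap (h.2.2 ha), fun hb => EvB_swap (h.2.1 hb)⟩

/-! ### the fraction field: injectivity of evST -/

lemma xx_ne : xx ≠ 0 := by
  unfold xx
  rw [show (0 : Kxy) = algebraMap Rxy Kxy 0 by rw [map_zero]]
  exact fun h => (MvPolynomial.X_ne_zero 0) (IsFractionRing.injective Rxy Kxy h)

lemma yy_ne : yy ≠ 0 := by
  unfold yy
  rw [show (0 : Kxy) = algebraMap Rxy Kxy 0 by rw [map_zero]]
  exact fun h => (MvPolynomial.X_ne_zero 1) (IsFractionRing.injective Rxy Kxy h)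

lemma pow_shift (e0 e1 N : ℕ) (h0 : e0 ≤ N) (h1 : e1 ≤ N) :
    (xx * yy) ^ (2 * N) * (sv ^ e0 * tv ^ e1) =
      xx ^ (e0 + 2 * N - 2 * e1) * yy ^ (e1 + 2 * N - 2 * e0) := by
  have hx : xx ≠ 0 := xx_ne
  have hy : yy ≠ 0 := yy_ne
  have hsv : sv ^ e0 * (yy ^ 2) ^ e0 = xx ^ e0 := by
    rw [sv, div_pow, div_mul_cancel₀]
    exact pow_ne_zero _ (pow_ne_zero _ hy)
  have htv : tv ^ e1 * (xx ^ 2) ^ e1 = yy ^ e1 := by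
    rw [tv, div_pow, div_mul_cancel₀]
    exact pow_ne_zero _ (pow_ne_zero _ hx)
  have hne : (yy ^ 2) ^ e0 * (xx ^ 2) ^ e1 ≠ 0 :=
    mul_ne_zero (pow_ne_zero _ (pow_ne_zero _ hy)) (pow_ne_zero _ (pow_ne_zero _ hx))
  apply mul_right_cancel₀ hne
  calc (xx * yy) ^ (2 * N) * (sv ^ e0 * tv ^ e1) * ((yy ^ 2) ^ e0 * (xx ^ 2) ^ e1)
      = (xx * yy) ^ (2 * N) * ((sv ^ e0 * (yy ^ 2) ^ e0) * (tv ^ e1 * (xx ^ 2) ^ e1)) := by ring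
    _ = (xx * yy) ^ (2 * N) * (xx ^ e0 * yy ^ e1) := by rw [hsv, htv]
    _ = xx ^ (2 * N + e0) * yy ^ (2 * N + e1) := by rw [mul_pow, pow_add, pow_add]; ring
    _ = xx ^ ((e0 + 2 * N - 2 * e1) + 2 * e1) * yy ^ ((e1 + 2 * N - 2 * e0) + 2 * e0) := by
        rw [show 2 * N + e0 = (e0 + 2 * N - 2 * e1) + 2 * e1 by omega,
          show 2 * N + e1 = (e1 + 2 * N - 2 * e0) + 2 * e0 by omega]
    _ = xx ^ (e0 + 2 * N - 2 * e1) * yy ^ (e1 + 2 * N - 2 * e0) *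
          ((yy ^ 2) ^ e0 * (xx ^ 2) ^ e1) := by
        rw [pow_add, pow_add, ← pow_mul, ← pow_mul]; ring

lemma mon2 (u : Fin 2 →₀ ℕ) (c : ℤ) :
    (monomial u c : Rxy) = C c * X 0 ^ (u 0) * X 1 ^ (u 1) := by
  rw [monomial_eq, Finsupp.prod_fintype _ _ (fun i => pow_zero _), Fin.prod_univ_two, mul_assoc]

lemma evST_monomial (u : Fin 2 →₀ ℕ) (c : ℤ) :
    evST (monomial u c) = algebraMap ℤ Kxy c * (sv ^ (u 0) * tv ^ (u 1)) := by
  rw [evST, mon2]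
  simp [mul_assoc]

lemma algMap_monomial (u : Fin 2 →₀ ℕ) (c : ℤ) :
    algebraMap Rxy Kxy (monomial u c) = algebraMap ℤ Kxy c * (xx ^ (u 0) * yy ^ (u 1)) := by
  have algC : algebraMap Rxy Kxy (MvPolynomial.C c) = algebraMap ℤ Kxy c := by
    rw [← MvPolynomial.algebraMap_eq, ← RingHom.comp_apply,
      Subsingleton.elim ((algebraMap Rxy Kxy).comp (algebraMap ℤ Rxy)) (algebraMap ℤ Kxy)]
  rw [mon2, map_mul, map_mul, map_pow, map_pow, ← xx, ← yy, mul_assoc, algC]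

lemma evST_zero_iff {F : Rxy} (hF : evST F = 0) : F = 0 := by
  classical
  set N := F.totalDegree with hN
  have hsupp : ∀ d ∈ F.support, d 0 ≤ N ∧ d 1 ≤ N := by
    intro d hd
    constructor <;>
      exact le_trans (MvPolynomial.degreeOf_le_iff.mp le_rfl d hd)
        (MvPolynomial.degreeOf_le_totalDegree F _)
  set e : (Fin 2 →₀ ℕ) → (Fin 2 →₀ ℕ) := fun d =>
    Finsupp.single 0 (d 0 + 2 * N - 2 * (d 1)) + Finsupp.single 1 (d 1 + 2 * N - 2 * (d 0))
    with he
  have he0 : ∀ d, e d 0 = d 0 + 2 * N - 2 * (d 1) := by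
    intro d; simp [he, Finsupp.single_apply]
  have he1 : ∀ d, e d 1 = d 1 + 2 * N - 2 * (d 0) := by
    intro d; simp [he, Finsupp.single_apply]
  set G : Rxy := ∑ d ∈ F.support, monomial (e d) (F.coeff d) with hG
  have hev : evST F = ∑ d ∈ F.support, algebraMap ℤ Kxy (F.coeff d) * (sv ^ (d 0) * tv ^ (d 1)) := by
    conv_lhs => rw [MvPolynomial.as_sum F]
    rw [evST, map_sum]
    exact Finset.sum_congr rfl fun d _ => evST_monomial d (F.coeff d)
  have key : algebraMap Rxy Kxy G = (xx * yy) ^ (2 * N) * evST F := by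
    rw [hG, map_sum, hev, Finset.mul_sum]
    refine Finset.sum_congr rfl fun d hd => ?_
    obtain ⟨h0, h1⟩ := hsupp d hd
    rw [algMap_monomial, he0 d, he1 d, ← pow_shift (d 0) (d 1) N h0 h1]
    ring
  have hG0 : G = 0 := by
    apply IsFractionRing.injective Rxy Kxy
    rw [key, hF, mul_zero, map_zero]
  have hcoeff : ∀ d ∈ F.support, F.coeff d = 0 := by
    intro d0 hd0
    have h1 : MvPolynomial.coeff (e d0) G = F.coeff d0 := by
      rw [hG, MvPolynomial.coeff_sum]
      rw [Finset.sum_eq_single d0]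
      · rw [MvPolynomial.coeff_monomial, if_pos rfl]
      · intro d hd hne
        rw [MvPolynomial.coeff_monomial, if_neg]
        intro hE
        apply hne
        obtain ⟨hd00, hd01⟩ := hsupp d hd
        obtain ⟨hd10, hd11⟩ := hsupp d0 hd0
        have hx0 : e d 0 = e d0 0 := by rw [hE]
        have hx1 : e d 1 = e d0 1 := by rw [hE]
        rw [he0, he0] at hx0
        rw [he1, he1] at hx1
        refine Finsupp.ext fun i => ?_
        fin_cases i
        · show d 0 = d0 0; omega
        · show d 1 = d0 1; omega
      · intro hd0'
        exact absurd hd0 hd0'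
    rw [hG0, MvPolynomial.coeff_zero] at h1
    exact h1.symm
  refine MvPolynomial.ext _ _ fun d => ?_
  rw [MvPolynomial.coeff_zero]
  by_cases hd : d ∈ F.support
  · exact hcoeff d hd
  · exact MvPolynomial.notMem_support_iff.mp hd

lemma evST_injective : Function.Injective evST := by
  intro p q h
  have hsub : evST (p - q) = 0 := by
    rw [evST, map_sub, ← evST, ← evST, h, sub_self]
  have := evST_zero_iff hsub
  exact sub_eq_zero.mp this

/-! ### facts about P -/

lemma evST_X0 : evST (X 0) = sv := by
  simp [evST]

lemma evST_X1 : evST (X 1) = tv := by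
  simp [evST]

lemma svtv : sv * tv * (xx * yy) = 1 := by
  rw [sv, tv, div_mul_div_comm, div_mul_eq_mul_div]
  rw [show (xx * yy) * (xx * yy) = yy ^ 2 * xx ^ 2 by ring]
  exact div_self (mul_ne_zero (pow_ne_zero _ yy_ne) (pow_ne_zero _ xx_ne))

lemma tvxx : tv * xx ^ 2 = yy := by
  rw [tv, div_mul_cancel₀]
  exact pow_ne_zero _ xx_ne

lemma svyy : sv * yy ^ 2 = xx := by
  rw [sv, div_mul_cancel₀]
  exact pow_ne_zero _ yy_ne

section PFacts

variable {Q P : ℤ → ℤ → Rxy}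

lemma evST_P (hQ : IsQSU3 Q) (hP : IsPSU3 Q P) (a b : ℕ) :
    evST (P (a : ℤ) (b : ℤ)) * (xx ^ a * yy ^ b) = algebraMap Rxy Kxy (Q (a : ℤ) (b : ℤ)) := by
  have h := hP.2 a b (Int.natCast_nonneg a) (Int.natCast_nonneg b)
  rw [zpow_natCast, zpow_natCast] at h
  rw [h, div_mul_cancel₀]
  exact mul_ne_zero (pow_ne_zero _ xx_ne) (pow_ne_zero _ yy_ne)

lemma P00 (hQ : IsQSU3 Q) (hP : IsPSU3 Q P) : P 0 0 = 1 := by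
  apply evST_injective
  have h := evST_P hQ hP 0 0
  simp only [Nat.cast_zero, pow_zero, mul_one, one_mul] at h
  rw [hQ.2.1, map_one] at h
  rw [h, evST, map_one]

lemma Qrec_y (hQ : IsQSU3 Q) (a b : ℤ) (ha : 0 ≤ a) (hb : 0 ≤ b) :
    X 1 * Q a b = Q a (b + 1) + Q (a - 1) b + Q (a + 1) (b - 1) := by
  have h := hQ.2.2.2.1 b a hb ha
  have hs := congrArg (rename (Equiv.swap (0 : Fin 2) 1)) h
  simp only [map_add, map_mul, rename_X] at hs
  rw [Equiv.swap_apply_left] at hs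
  rw [hQ.2.2.2.2, hQ.2.2.2.2, hQ.2.2.2.2, hQ.2.2.2.2] at hs
  exact hs

lemma Prec (hQ : IsQSU3 Q) (hP : IsPSU3 Q P) (a b : ℕ) :
    P ((a : ℤ) + 1) (b : ℤ) =
      P (a : ℤ) (b : ℤ) - (X 0 * X 1) * P (a : ℤ) ((b : ℤ) - 1)
        - X 1 * P ((a : ℤ) - 1) ((b : ℤ) + 1) := by
  apply evST_injective
  have hxne : (xx ^ (a + 1) * yy ^ b) ≠ 0 :=
    mul_ne_zero (pow_ne_zero _ xx_ne) (pow_ne_zero _ yy_ne)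
  apply mul_right_cancel₀ hxne
  have hL : evST (P ((a : ℤ) + 1) (b : ℤ)) * (xx ^ (a + 1) * yy ^ b) =
      algebraMap Rxy Kxy (Q ((a : ℤ) + 1) (b : ℤ)) := by
    have h := evST_P hQ hP (a + 1) b
    push_cast at h
    exact h
  rw [hL]
  have hrec : Q ((a : ℤ) + 1) (b : ℤ) =
      X 0 * Q (a : ℤ) (b : ℤ) - Q (a : ℤ) ((b : ℤ) - 1) - Q ((a : ℤ) - 1) ((b : ℤ) + 1) := by
    have h := hQ.2.2.2.1 a b (Int.natCast_nonneg a) (Int.natCast_nonneg b)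
    linear_combination -h
  have hexp : evST (P (a : ℤ) (b : ℤ) - (X 0 * X 1) * P (a : ℤ) ((b : ℤ) - 1)
      - X 1 * P ((a : ℤ) - 1) ((b : ℤ) + 1)) =
      evST (P (a : ℤ) (b : ℤ)) - sv * tv * evST (P (a : ℤ) ((b : ℤ) - 1))
        - tv * evST (P ((a : ℤ) - 1) ((b : ℤ) + 1)) := by
    simp only [evST, map_sub, map_mul, aeval_X, Matrix.cons_val_zero, Matrix.cons_val_one,
      Matrix.head_cons]
  have T1 : evST (P (a : ℤ) (b : ℤ)) * (xx ^ (a + 1) * yy ^ b) =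
      xx * algebraMap Rxy Kxy (Q (a : ℤ) (b : ℤ)) := by
    have h := evST_P hQ hP a b
    calc evST (P (a : ℤ) (b : ℤ)) * (xx ^ (a + 1) * yy ^ b)
        = xx * (evST (P (a : ℤ) (b : ℤ)) * (xx ^ a * yy ^ b)) := by rw [pow_succ]; ring
      _ = xx * algebraMap Rxy Kxy (Q (a : ℤ) (b : ℤ)) := by rw [h]
  have T2 : sv * tv * evST (P (a : ℤ) ((b : ℤ) - 1)) * (xx ^ (a + 1) * yy ^ b) =
      algebraMap Rxy Kxy (Q (a : ℤ) ((b : ℤ) - 1)) := by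
    cases b with
    | zero =>
      rw [show ((0 : ℕ) : ℤ) - 1 = -1 by norm_num, hP.1 a (-1) (Or.inr (by norm_num)),
        hQ.1 a (-1) (Or.inr (by norm_num))]
      rw [evST, map_zero, map_zero, mul_zero, zero_mul]
    | succ b' =>
      have hcast : ((b' + 1 : ℕ) : ℤ) - 1 = (b' : ℤ) := by push_cast; ring
      rw [hcast]
      have h := evST_P hQ hP a b'
      calc sv * tv * evST (P (a : ℤ) (b' : ℤ)) * (xx ^ (a + 1) * yy ^ (b' + 1))
          = (sv * tv * (xx * yy)) * (evST (P (a : ℤ) (b' : ℤ)) * (xx ^ a * yy ^ b')) := by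
            rw [pow_succ, pow_succ]; ring
        _ = algebraMap Rxy Kxy (Q (a : ℤ) (b' : ℤ)) := by rw [svtv, h, one_mul]
  have T3 : tv * evST (P ((a : ℤ) - 1) ((b : ℤ) + 1)) * (xx ^ (a + 1) * yy ^ b) =
      algebraMap Rxy Kxy (Q ((a : ℤ) - 1) ((b : ℤ) + 1)) := by
    cases a with
    | zero =>
      rw [show ((0 : ℕ) : ℤ) - 1 = -1 by norm_num, hP.1 (-1) _ (Or.inl (by norm_num)),
        hQ.1 (-1) _ (Or.inl (by norm_num))]
      rw [evST, map_zero, map_zero, mul_zero, zero_mul]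
    | succ a' =>
      have hcast : ((a' + 1 : ℕ) : ℤ) - 1 = (a' : ℤ) := by push_cast; ring
      rw [hcast]
      have hcast2 : ((b : ℕ) : ℤ) + 1 = ((b + 1 : ℕ) : ℤ) := by push_cast; ring
      rw [hcast2]
      have h := evST_P hQ hP a' (b + 1)
      calc tv * evST (P (a' : ℤ) ((b + 1 : ℕ) : ℤ)) * (xx ^ (a' + 1 + 1) * yy ^ b)
          = (tv * xx ^ 2) * (evST (P (a' : ℤ) ((b + 1 : ℕ) : ℤ)) * (xx ^ a' * yy ^ b)) := by
            ring
        _ = evST (P (a' : ℤ) ((b + 1 : ℕ) : ℤ)) * (xx ^ a' * yy ^ (b + 1)) := by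
            rw [tvxx, pow_succ]; ring
        _ = algebraMap Rxy Kxy (Q ((a' : ℕ) : ℤ) ((b + 1 : ℕ) : ℤ)) := h
  calc algebraMap Rxy Kxy (Q ((a : ℤ) + 1) (b : ℤ))
      = xx * algebraMap Rxy Kxy (Q (a : ℤ) (b : ℤ))
          - algebraMap Rxy Kxy (Q (a : ℤ) ((b : ℤ) - 1))
          - algebraMap Rxy Kxy (Q ((a : ℤ) - 1) ((b : ℤ) + 1)) := by
        rw [hrec, map_sub, map_sub, map_mul, ← xx]
    _ = evST (P (a : ℤ) (b : ℤ) - (X 0 * X 1) * P (a : ℤ) ((b : ℤ) - 1)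
          - X 1 * P ((a : ℤ) - 1) ((b : ℤ) + 1)) * (xx ^ (a + 1) * yy ^ b) := by
        rw [hexp, ← T1, ← T2, ← T3]; ring

lemma Prec_y (hQ : IsQSU3 Q) (hP : IsPSU3 Q P) (b : ℕ) :
    P (0 : ℤ) ((b : ℤ) + 1) = P (0 : ℤ) (b : ℤ) - X 0 * P (1 : ℤ) ((b : ℤ) - 1) := by
  apply evST_injective
  have hyne : (yy ^ (b + 1) : Kxy) ≠ 0 := pow_ne_zero _ yy_ne
  apply mul_right_cancel₀ hyne
  have hL : evST (P (0 : ℤ) ((b : ℤ) + 1)) * yy ^ (b + 1) =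
      algebraMap Rxy Kxy (Q (0 : ℤ) ((b : ℤ) + 1)) := by
    have h := evST_P hQ hP 0 (b + 1)
    push_cast at h
    simpa using h
  rw [hL]
  have hrec : Q (0 : ℤ) ((b : ℤ) + 1) =
      X 1 * Q (0 : ℤ) (b : ℤ) - Q (1 : ℤ) ((b : ℤ) - 1) := by
    have h := Qrec_y hQ 0 b le_rfl (Int.natCast_nonneg b)
    have h0 : Q ((0 : ℤ) - 1) (b : ℤ) = 0 := hQ.1 _ _ (Or.inl (by norm_num))
    rw [show (0 : ℤ) - 1 = -1 by ring] at h0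
    rw [show (0 : ℤ) - 1 = -1 by ring, show (0 : ℤ) + 1 = 1 by ring] at h
    linear_combination -h - h0
  have hexp : evST (P (0 : ℤ) (b : ℤ) - X 0 * P (1 : ℤ) ((b : ℤ) - 1)) =
      evST (P (0 : ℤ) (b : ℤ)) - sv * evST (P (1 : ℤ) ((b : ℤ) - 1)) := by
    simp only [evST, map_sub, map_mul, aeval_X, Matrix.cons_val_zero]
  have T1 : evST (P (0 : ℤ) (b : ℤ)) * yy ^ (b + 1) =
      yy * algebraMap Rxy Kxy (Q (0 : ℤ) (b : ℤ)) := by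
    have h := evST_P hQ hP 0 b
    simp only [Nat.cast_zero, pow_zero, one_mul] at h
    rw [pow_succ, ← mul_assoc, h]
    ring
  have T2 : sv * evST (P (1 : ℤ) ((b : ℤ) - 1)) * yy ^ (b + 1) =
      algebraMap Rxy Kxy (Q (1 : ℤ) ((b : ℤ) - 1)) := by
    cases b with
    | zero =>
      rw [show ((0 : ℕ) : ℤ) - 1 = -1 by norm_num, hP.1 1 (-1) (Or.inr (by norm_num)),
        hQ.1 1 (-1) (Or.inr (by norm_num))]
      rw [evST, map_zero, map_zero, mul_zero, zero_mul]
    | succ b' =>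
      have hcast : ((b' + 1 : ℕ) : ℤ) - 1 = (b' : ℤ) := by push_cast; ring
      rw [hcast]
      have h := evST_P hQ hP 1 b'
      simp only [Nat.cast_one, pow_one] at h
      calc sv * evST (P (1 : ℤ) (b' : ℤ)) * yy ^ (b' + 1 + 1)
          = (sv * yy ^ 2) * (evST (P (1 : ℤ) (b' : ℤ)) * yy ^ b') := by ring
        _ = evST (P (1 : ℤ) (b' : ℤ)) * (xx * yy ^ b') := by rw [svyy]; ring
        _ = algebraMap Rxy Kxy (Q (1 : ℤ) (b' : ℤ)) := h
  calc algebraMap Rxy Kxy (Q (0 : ℤ) ((b : ℤ) + 1))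
      = yy * algebraMap Rxy Kxy (Q (0 : ℤ) (b : ℤ))
          - algebraMap Rxy Kxy (Q (1 : ℤ) ((b : ℤ) - 1)) := by
        rw [hrec, map_sub, map_mul, ← yy]
    _ = evST (P (0 : ℤ) (b : ℤ) - X 0 * P (1 : ℤ) ((b : ℤ) - 1)) * yy ^ (b + 1) := by
        rw [hexp, ← T1, ← T2]; ring

end PFacts

/-! ### main induction -/

lemma Shape_one : Shape 0 0 (1 : Rxy) := by
  have hrep1 : (1 : Rxy) = shapeSum 0 (fun j => if j = 0 then 1 else 0) (fun _ => 0) := by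
    simp [shapeSum]
  have hrep2 : (1 : Rxy) = shapeSum 0 (fun _ => 0) (fun j => if j = 0 then 1 else 0) := by
    simp [shapeSum]
  have hdeg : ∀ j : ℕ, ((if j = 0 then 1 else 0 : Polynomial ℤ)).degree ≤
      ((0 / 2 : ℕ) : WithBot ℕ) := by
    intro j
    split
    · exact Polynomial.degree_one_le.trans (by norm_num)
    · exact deg_zero_le
  have hlt : ∀ j : ℕ, 0 < j → ((if j = 0 then 1 else 0 : Polynomial ℤ)).degree <
      ((0 / 2 : ℕ) : WithBot ℕ) := by
    intro j hj
    rw [if_neg (by omega)]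
    exact deg_zero_lt _
  refine ⟨⟨0, _, _, hrep1, hdeg, fun _ => deg_zero_le⟩,
    fun _ => ⟨0, _, _, hrep1, hdeg, fun _ => deg_zero_le, hlt, fun _ => rfl⟩,
    fun _ => ⟨0, _, _, hrep2, fun _ => deg_zero_le, hdeg, hlt, fun _ => rfl⟩⟩

lemma Shape_P {Q P : ℤ → ℤ → Rxy} (hQ : IsQSU3 Q) (hP : IsPSU3 Q P) (a b : ℕ) :
    Shape a b (P (a : ℤ) (b : ℤ)) := by
  have main : ∀ N a b : ℕ, a + b ≤ N → Shape a b (P (a : ℤ) (b : ℤ)) := by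
    intro N
    induction N with
    | zero =>
      intro a b hab
      have ha : a = 0 := by omega
      have hb : b = 0 := by omega
      subst ha; subst hb
      rw [Nat.cast_zero, P00 hQ hP]
      exact Shape_one
    | succ N ih =>
      intro a
      induction a using Nat.strong_induction_on with
      | _ a iha =>
        intro b hab
        cases a with
        | zero =>
          cases b with
          | zero =>
            rw [Nat.cast_zero, P00 hQ hP]
            exact Shape_one
          | succ β =>
            have hrec := Prec_y hQ hP β
            have h1 : Shape β 0 (sw (P (0 : ℤ) (β : ℤ))) := by
              have := ih 0 β (by omega)
              rw [Nat.cast_zero] at this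
              exact Shape_swap this
            have hr : (sw (P (1 : ℤ) ((β : ℤ) - 1)) = 0) ∨
                (1 ≤ β ∧ Shape (β - 1) (0 + 1) (sw (P (1 : ℤ) ((β : ℤ) - 1)))) := by
              cases β with
              | zero =>
                left
                rw [show ((0 : ℕ) : ℤ) - 1 = -1 by norm_num,
                  hP.1 1 (-1) (Or.inr (by norm_num)), map_zero]
              | succ β' =>
                right
                refine ⟨by omega, ?_⟩
                have hs : Shape 1 β' (P ((1 : ℕ) : ℤ) ((β' : ℕ) : ℤ)) := ih 1 β' (by omega)
                rw [Nat.cast_one] at hs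
                have := Shape_swap hs
                rw [show ((β' + 1 : ℕ) : ℤ) - 1 = (β' : ℤ) by push_cast; ring,
                  show β' + 1 - 1 = β' by omega]
                exact this
            have hstep := Shape_step (p := sw (P (0 : ℤ) (β : ℤ))) (q := 0)
              (r := sw (P (1 : ℤ) ((β : ℤ) - 1))) h1 (Or.inl rfl) hr
            have hswap := Shape_swap hstep
            rw [mul_zero, sub_zero] at hswap
            have hsw : sw (sw (P (0 : ℤ) (β : ℤ)) - X 1 * sw (P (1 : ℤ) ((β : ℤ) - 1))) =
                P (0 : ℤ) (β : ℤ) - X 0 * P (1 : ℤ) ((β : ℤ) - 1) := by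
              rw [map_sub, map_mul, sw_sw, sw_sw, sw_X1]
            rw [hsw] at hswap
            rw [show ((β + 1 : ℕ) : ℤ) = (β : ℤ) + 1 by push_cast; ring, Nat.cast_zero, hrec]
            exact hswap
        | succ α =>
          have hrec := Prec hQ hP α b
          have hp : Shape α b (P (α : ℤ) (b : ℤ)) := iha α (by omega) b (by omega)
          have hq : (P (α : ℤ) ((b : ℤ) - 1) = 0) ∨
              (1 ≤ b ∧ Shape α (b - 1) (P (α : ℤ) ((b : ℤ) - 1))) := by
            cases b with
            | zero =>
              left
              rw [show ((0 : ℕ) : ℤ) - 1 = -1 by norm_num]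
              exact hP.1 _ _ (Or.inr (by norm_num))
            | succ b' =>
              right
              refine ⟨by omega, ?_⟩
              have := ih α b' (by omega)
              rw [show ((b' + 1 : ℕ) : ℤ) - 1 = (b' : ℤ) by push_cast; ring,
                show b' + 1 - 1 = b' by omega]
              exact this
          have hr : (P ((α : ℤ) - 1) ((b : ℤ) + 1) = 0) ∨
              (1 ≤ α ∧ Shape (α - 1) (b + 1) (P ((α : ℤ) - 1) ((b : ℤ) + 1))) := by
            rcases Nat.eq_zero_or_pos α with rfl | hpos
            · left
              rw [show ((0 : ℕ) : ℤ) - 1 = -1 by norm_num]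
              exact hP.1 _ _ (Or.inl (by norm_num))
            · obtain ⟨α', rfl⟩ : ∃ α', α = α' + 1 := ⟨α - 1, by omega⟩
              right
              refine ⟨by omega, ?_⟩
              have := iha α' (by omega) (b + 1) (by omega)
              rw [show ((α' + 1 : ℕ) : ℤ) - 1 = (α' : ℤ) by push_cast; ring,
                show α' + 1 - 1 = α' by omega,
                show ((b : ℕ) : ℤ) + 1 = ((b + 1 : ℕ) : ℤ) by push_cast; ring]
              exact this
          have := Shape_step hp hq hr
          rw [show ((α + 1 : ℕ) : ℤ) = (α : ℤ) + 1 by push_cast; ring, hrec]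
          exact this
  exact main (a + b) a b le_rfl

end SU3

theorem stmt_7 (Q P : ℤ → ℤ → Rxy) (hQ : IsQSU3 Q) (hP : IsPSU3 Q P) (l1 l2 : ℕ) :
    (∃ (n : ℕ) (A B : ℕ → Polynomial ℤ),
      P (l1 : ℤ) (l2 : ℤ) = ∑ j ∈ Finset.range (n + 1),
          (X 0 * X 1) ^ j *
            (Polynomial.aeval (X 0 : Rxy) (A j) + Polynomial.aeval (X 1 : Rxy) (B j)) ∧
      (∀ j, (A j).degree ≤ ((l2 / 2 : ℕ) : WithBot ℕ)) ∧
      (∀ j, (B j).degree ≤ ((l1 / 2 : ℕ) : WithBot ℕ))) ∧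
    (Even l2 → ∃ (n : ℕ) (A B : ℕ → Polynomial ℤ),
      P (l1 : ℤ) (l2 : ℤ) = ∑ j ∈ Finset.range (n + 1),
          (X 0 * X 1) ^ j *
            (Polynomial.aeval (X 0 : Rxy) (A j) + Polynomial.aeval (X 1 : Rxy) (B j)) ∧
      (∀ j, (A j).degree ≤ ((l2 / 2 : ℕ) : WithBot ℕ)) ∧
      (∀ j, (B j).degree ≤ ((l1 / 2 : ℕ) : WithBot ℕ)) ∧
      (∀ j, 0 < j → (A j).degree < ((l2 / 2 : ℕ) : WithBot ℕ)) ∧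
      (∀ j, (B j).coeff 0 = 0)) ∧
    (Even l1 → ∃ (n : ℕ) (A B : ℕ → Polynomial ℤ),
      P (l1 : ℤ) (l2 : ℤ) = ∑ j ∈ Finset.range (n + 1),
          (X 0 * X 1) ^ j *
            (Polynomial.aeval (X 0 : Rxy) (A j) + Polynomial.aeval (X 1 : Rxy) (B j)) ∧
      (∀ j, (A j).degree ≤ ((l2 / 2 : ℕ) : WithBot ℕ)) ∧
      (∀ j, (B j).degree ≤ ((l1 / 2 : ℕ) : WithBot ℕ)) ∧
      (∀ j, 0 < j → (B j).degree < ((l1 / 2 : ℕ) : WithBot ℕ)) ∧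
      (∀ j, (A j).coeff 0 = 0)) := by
  obtain ⟨hplain, hevB, hevA⟩ := SU3.Shape_P hQ hP l1 l2
  refine ⟨?_, ?_, ?_⟩
  · obtain ⟨n, A, B, hrep, hA, hB⟩ := hplain
    exact ⟨n, A, B, hrep, hA, hB⟩
  · intro h2
    obtain ⟨n, A, B, hrep, hA, hB, hAlt, hB0⟩ := hevB h2
    exact ⟨n, A, B, hrep, hA, hB, hAlt, hB0⟩
  · intro h1
    obtain ⟨n, A, B, hrep, hA, hB, hBlt, hA0⟩ := hevA h1
    exact ⟨n, A, B, hrep, hA, hB, hBlt, hA0⟩
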